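/- Let u : ℝ → ℝ be continuous and 2π-periodic with ∫_{−π}^{π} u(x) dx = 0, and let X ∈ ℝ be a point where u attains its global maximum. Then, interpreting the integral of the nonnegative integrand in [0,+∞], (1/(4π)) ∫_{−π}^{π} ( u(X) − u(X−η) ) / sin²(η/2) dη ≥ u(X)/2. In particular, if the periodic fractional Laplacian Λu(X) := (1/(4π))·lim_{ε→0⁺} ∫_{ε<|η|<π} (u(X)−u(X−η))/sin²(η/2) dη exists, then Λu(X) ≥ u(X)/2. -/
import Mathlib


open MeasureTheory Filter Set

/-- The truncated principal-value integral for the periodic fractional Laplacian. -/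
noncomputable def pvIntegralT (u : ℝ → ℝ) (x ε : ℝ) : ℝ :=
  (1 / (4 * Real.pi)) *
    ∫ η in {η : ℝ | ε < |η| ∧ |η| < Real.pi}, (u x - u (x - η)) / Real.sin (η / 2) ^ 2

/-- `Λu(x) = L` in the periodic principal-value sense. -/
def HasPVLambdaT (u : ℝ → ℝ) (x L : ℝ) : Prop :=
  Tendsto (fun ε => pvIntegralT u x ε) (nhdsWithin 0 (Set.Ioi 0)) (nhds L)

set_option maxHeartbeats 1000000 in
/-- at a global maximum `X` of a continuous, 2π-periodic, mean-zero
function `u`, the periodic fractional Laplacian satisfies `Λu(X) ≥ u(X)/2`, the integral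
of the nonnegative integrand being interpreted in `[0,∞]`. -/
theorem lower_bound_at_maximum_periodic
    (u : ℝ → ℝ) (X : ℝ)
    (hc : Continuous u)
    (hper : ∀ x : ℝ, u (x + 2 * Real.pi) = u x)
    (hmean : (∫ x in (-Real.pi)..Real.pi, u x) = 0)
    (hmax : ∀ x : ℝ, u x ≤ u X) :
    ENNReal.ofReal (u X / 2) ≤
        ENNReal.ofReal (1 / (4 * Real.pi)) *
          ∫⁻ η in Ioo (-Real.pi) Real.pi,
            ENNReal.ofReal ((u X - u (X - η)) / Real.sin (η / 2) ^ 2) ∧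
      ∀ L : ℝ, HasPVLambdaT u X L → u X / 2 ≤ L := by
  have hπ : (0:ℝ) < Real.pi := Real.pi_pos
  set g : ℝ → ℝ := fun η => u X - u (X - η) with hg_def
  have hg0 : ∀ η, 0 ≤ g η := fun η => sub_nonneg.2 (hmax _)
  have hgc : Continuous g := continuous_const.sub (hc.comp (continuous_const.sub continuous_id))
  have hperiodic : Function.Periodic u (2 * Real.pi) := hper
  have hsub : (∫ η in (-Real.pi)..Real.pi, u (X - η)) = 0 := by
    rw [intervalIntegral.integral_comp_sub_left u X]
    have h1 : X - Real.pi + 2 * Real.pi = X - -Real.pi := by ring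
    have h2 : -Real.pi + 2 * Real.pi = Real.pi := by ring
    have := hperiodic.intervalIntegral_add_eq (X - Real.pi) (-Real.pi)
    rw [h1, h2] at this
    rw [this, hmean]
  have hgint : (∫ η in (-Real.pi)..Real.pi, g η) = 2 * Real.pi * u X := by
    have hI1 : IntervalIntegrable (fun _ : ℝ => u X) volume (-Real.pi) Real.pi :=
      intervalIntegrable_const
    have hI2 : IntervalIntegrable (fun η => u (X - η)) volume (-Real.pi) Real.pi :=
      (hc.comp (continuous_const.sub continuous_id)).intervalIntegrable _ _
    rw [hg_def]
    rw [intervalIntegral.integral_sub hI1 hI2, hsub, intervalIntegral.integral_const,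
      sub_zero, smul_eq_mul]
    ring
  have huX : 0 ≤ u X := by
    have h := intervalIntegral.integral_mono_on (μ := volume) (le_of_lt (by linarith : -Real.pi < Real.pi))
      (hc.intervalIntegrable _ _) intervalIntegrable_const (fun x _ => hmax x)
    rw [hmean, intervalIntegral.integral_const, smul_eq_mul] at h
    nlinarith
  have hgInt : IntegrableOn g (Ioo (-Real.pi) Real.pi) :=
    ((intervalIntegrable_iff_integrableOn_Ioo_of_le (by linarith : -Real.pi ≤ Real.pi)).1
      (hgc.intervalIntegrable _ _))
  have hIooInt : (∫ η in Ioo (-Real.pi) Real.pi, g η) = 2 * Real.pi * u X := by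
    rw [← integral_Ioc_eq_integral_Ioo, ← intervalIntegral.integral_of_le (by linarith), hgint]
  constructor
  · -- Part 1
    have hpt : ∀ η ∈ Ioo (-Real.pi) Real.pi,
        ENNReal.ofReal (g η) ≤ ENNReal.ofReal (g η / Real.sin (η / 2) ^ 2) := by
      intro η hη
      obtain ⟨hη1, hη2⟩ := hη
      rcases eq_or_ne η 0 with rfl | hne
      · simp [hg_def]
      · have hs0 : Real.sin (η / 2) ≠ 0 := by
          have h1 : -Real.pi < η / 2 := by linarith
          have h2 : η / 2 < Real.pi := by linarith
          simp only [ne_eq, Real.sin_eq_zero_iff_of_lt_of_lt h1 h2]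
          intro h; exact hne (by linarith)
        have hs : 0 < Real.sin (η / 2) ^ 2 := by positivity
        have hs1 : Real.sin (η / 2) ^ 2 ≤ 1 := Real.sin_sq_le_one _
        apply ENNReal.ofReal_le_ofReal
        rw [le_div_iff₀ hs]
        have := mul_le_mul_of_nonneg_left hs1 (hg0 η)
        linarith
    calc ENNReal.ofReal (u X / 2)
        = ENNReal.ofReal (1 / (4 * Real.pi)) * ENNReal.ofReal (2 * Real.pi * u X) := by
          rw [← ENNReal.ofReal_mul (by positivity)]
          congr 1
          field_simp
          ring
      _ = ENNReal.ofReal (1 / (4 * Real.pi)) *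
            ENNReal.ofReal (∫ η in Ioo (-Real.pi) Real.pi, g η) := by rw [hIooInt]
      _ ≤ ENNReal.ofReal (1 / (4 * Real.pi)) *
            ∫⁻ η in Ioo (-Real.pi) Real.pi, ENNReal.ofReal (g η) := by
          gcongr
          rw [MeasureTheory.ofReal_integral_eq_lintegral_ofReal hgInt
            (Filter.Eventually.of_forall hg0)]
      _ ≤ _ :=
          mul_le_mul_right (setLIntegral_mono' measurableSet_Ioo hpt) _
  · -- Part 2
    intro L hL
    set F : ℝ → ℝ := fun ε => (1 / (4 * Real.pi)) * (2 * Real.pi * u X - ∫ η in (-ε)..ε, g η)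
      with hF_def
    have hFcont : Continuous F := by
      apply continuous_const.mul
      apply continuous_const.sub
      have hprim : Continuous fun t : ℝ => ∫ η in (0:ℝ)..t, g η :=
        intervalIntegral.continuous_primitive (fun a b => hgc.intervalIntegrable a b) 0
      have heq : (fun ε : ℝ => ∫ η in (-ε)..ε, g η)
          = fun ε : ℝ => (∫ η in (0:ℝ)..ε, g η) - ∫ η in (0:ℝ)..(-ε), g η := by
        funext ε
        rw [← intervalIntegral.integral_add_adjacent_intervals
          (hgc.intervalIntegrable (-ε) 0) (hgc.intervalIntegrable 0 ε),
          intervalIntegral.integral_symm (0:ℝ) (-ε)]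
        ring
      rw [heq]
      exact hprim.sub (hprim.comp continuous_neg)
    have hF0 : F 0 = u X / 2 := by
      simp only [hF_def, neg_zero, intervalIntegral.integral_same, sub_zero]
      field_simp
      ring
    have hFtend : Tendsto F (nhdsWithin 0 (Set.Ioi 0)) (nhds (u X / 2)) := by
      rw [← hF0]
      exact (hFcont.tendsto 0).mono_left nhdsWithin_le_nhds
    have hev : ∀ᶠ ε in nhdsWithin 0 (Set.Ioi (0:ℝ)), F ε ≤ pvIntegralT u X ε := by
      filter_upwards [Ioo_mem_nhdsGT_of_mem (⟨le_refl (0:ℝ), hπ⟩ : (0:ℝ) ∈ Ico 0 Real.pi)]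
        with ε hε
      obtain ⟨hε0, hεπ⟩ := hε
      have hSeq : {η : ℝ | ε < |η| ∧ |η| < Real.pi}
          = Ioo (-Real.pi) Real.pi \ Icc (-ε) ε := by
        ext η
        simp only [mem_setOf_eq, mem_diff, mem_Ioo, mem_Icc, abs_lt, not_and_or, not_le]
        constructor
        · rintro ⟨h1, h2⟩
          refine ⟨h2, ?_⟩
          rcases lt_or_ge η 0 with h | h
          · left; rw [abs_of_neg h] at h1; linarith
          · right; rw [abs_of_nonneg h] at h1; linarith
        · rintro ⟨h2, h1⟩
          refine ⟨?_, h2⟩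
          rcases h1 with h | h
          · rw [abs_of_neg (by linarith)]; linarith
          · rw [abs_of_pos (by linarith)]; linarith
      have hIccSub : Icc (-ε) ε ⊆ Ioo (-Real.pi) Real.pi := fun x hx => by
        obtain ⟨hx1, hx2⟩ := hx
        exact ⟨by linarith, by linarith⟩
      have hSsub : Ioo (-Real.pi) Real.pi \ Icc (-ε) ε ⊆ Ioo (-Real.pi) Real.pi :=
        diff_subset
      have hcpos : 0 < Real.sin (ε / 2) ^ 2 := by
        have : 0 < Real.sin (ε / 2) :=
          Real.sin_pos_of_pos_of_lt_pi (by linarith) (by linarith)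
        positivity
      have hsinlb : ∀ η ∈ Ioo (-Real.pi) Real.pi \ Icc (-ε) ε,
          Real.sin (ε / 2) ^ 2 ≤ Real.sin (η / 2) ^ 2 := by
        rintro η ⟨⟨h1, h2⟩, h3⟩
        have habs : ε < |η| := by
          simp only [mem_Icc, not_and_or, not_le] at h3
          rcases h3 with h | h
          · rw [abs_of_neg (by linarith)]; linarith
          · rw [abs_of_pos (by linarith)]; linarith
        have habs2 : |η| < Real.pi := abs_lt.2 ⟨h1, h2⟩
        have hsq : Real.sin (η / 2) ^ 2 = Real.sin (|η| / 2) ^ 2 := by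
          rcases abs_cases η with ⟨h, _⟩ | ⟨h, _⟩
          · rw [h]
          · rw [h, neg_div, Real.sin_neg, neg_sq]
        rw [hsq]
        have hmono : Real.sin (ε / 2) ≤ Real.sin (|η| / 2) :=
          Real.sin_le_sin_of_le_of_le_pi_div_two (by linarith) (by linarith) (by linarith)
        have h0 : 0 ≤ Real.sin (ε / 2) :=
          Real.sin_nonneg_of_nonneg_of_le_pi (by linarith) (by linarith)
        nlinarith
      have hmeasS : MeasurableSet (Ioo (-Real.pi) Real.pi \ Icc (-ε) ε) :=
        measurableSet_Ioo.diff measurableSet_Icc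
      have hgS : IntegrableOn g (Ioo (-Real.pi) Real.pi \ Icc (-ε) ε) :=
        hgInt.mono_set hSsub
      have hfS : IntegrableOn (fun η => g η / Real.sin (η / 2) ^ 2)
          (Ioo (-Real.pi) Real.pi \ Icc (-ε) ε) := by
        apply Integrable.mono' (hgS.const_mul ((Real.sin (ε / 2) ^ 2)⁻¹))
        · exact (hgc.measurable.div
            ((Real.continuous_sin.comp (continuous_id.div_const 2)).pow 2).measurable).aestronglyMeasurable
        · rw [ae_restrict_iff' hmeasS]
          filter_upwards with η hη
          have hs := hsinlb η hη
          have hfnn : 0 ≤ g η / Real.sin (η / 2) ^ 2 := div_nonneg (hg0 η) (by positivity)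
          rw [Real.norm_eq_abs, abs_of_nonneg hfnn, ← div_eq_inv_mul]
          exact div_le_div_of_nonneg_left (hg0 η) hcpos hs
      have hineq : ∀ η ∈ Ioo (-Real.pi) Real.pi \ Icc (-ε) ε,
          g η ≤ g η / Real.sin (η / 2) ^ 2 := by
        intro η hη
        have hs := hsinlb η hη
        have hs' : 0 < Real.sin (η / 2) ^ 2 := lt_of_lt_of_le hcpos hs
        have hs1 : Real.sin (η / 2) ^ 2 ≤ 1 := Real.sin_sq_le_one _
        rw [le_div_iff₀ hs']
        have := mul_le_mul_of_nonneg_left hs1 (hg0 η)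
        linarith
      have hint_le : (∫ η in Ioo (-Real.pi) Real.pi \ Icc (-ε) ε, g η)
          ≤ ∫ η in Ioo (-Real.pi) Real.pi \ Icc (-ε) ε, g η / Real.sin (η / 2) ^ 2 :=
        setIntegral_mono_on hgS hfS hmeasS hineq
      have hdiff : (∫ η in Ioo (-Real.pi) Real.pi \ Icc (-ε) ε, g η)
          = 2 * Real.pi * u X - ∫ η in (-ε)..ε, g η := by
        rw [integral_diff measurableSet_Icc hgInt hIccSub, hIooInt]
        congr 1
        rw [intervalIntegral.integral_of_le (by linarith), integral_Icc_eq_integral_Ioc]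
      show (1 / (4 * Real.pi)) * (2 * Real.pi * u X - ∫ η in (-ε)..ε, g η) ≤ pvIntegralT u X ε
      unfold pvIntegralT
      rw [hSeq]
      apply mul_le_mul_of_nonneg_left _ (by positivity)
      rw [← hdiff]
      exact hint_le
    exact le_of_tendsto_of_tendsto hFtend hL hev
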